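/- Let α₁, …, αₙ ∈ ℂ, r ≠ 0, and let f : [0,∞) → ℂ be continuous and bounded. Define φ₀ = f and φ_j(t) = φ_{j−1}(t) + (1 − 1/r) α_j ∫₀ᵗ e^{α_j(t−τ)} φ_{j−1}(τ) dτ for j = 1,…,n. Then for Re s sufficiently large, the Laplace transform of φₙ equals F(s) · ∏_{j=1}^n (s − α_j/r)/(s − α_j), where F is the Laplace transform of f. -/

import Mathlib

open Complex MeasureTheory Finset intervalIntegral

lemma lapInt {u : ℝ → ℂ} (hg : Continuous u) {M : ℝ}
    (hbd : ∀ t : ℝ, 0 ≤ t → ‖u t‖ ≤ M) {s : ℂ} (hs : 0 < s.re) :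
    IntegrableOn (fun t : ℝ => Complex.exp (-s * t) * u t) (Set.Ioi (0:ℝ)) := by
  apply Integrable.mono' (g := fun t => M * Real.exp (-s.re * t))
    ((exp_neg_integrableOn_Ioi 0 hs).const_mul M)
    ((Continuous.mul (by continuity) hg).aestronglyMeasurable)
  filter_upwards [ae_restrict_mem measurableSet_Ioi] with t ht
  have ht' : (0:ℝ) ≤ t := le_of_lt ht
  show ‖Complex.exp (-s * t) * u t‖ ≤ _
  rw [norm_mul, Complex.norm_exp]
  have : (-s * t).re = -s.re * t := by simp [Complex.mul_re]
  rw [this, mul_comm M]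
  exact mul_le_mul_of_nonneg_left (hbd t ht') (Real.exp_pos _).le

lemma conv_eq (a : ℂ) (u : ℝ → ℂ) (t : ℝ) :
    (∫ τ in (0:ℝ)..t, Complex.exp (a * (t - τ)) * u τ) =
      Complex.exp (a * t) * ∫ τ in (0:ℝ)..t, Complex.exp (-(a * τ)) * u τ := by
  rw [← intervalIntegral.integral_const_mul]
  apply intervalIntegral.integral_congr
  intro τ _
  show Complex.exp (a * (t - τ)) * u τ = Complex.exp (a * t) * (Complex.exp (-(a * τ)) * u τ)
  rw [← mul_assoc, ← Complex.exp_add]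
  congr 2
  push_cast
  ring

lemma conv_cont (a : ℂ) {u : ℝ → ℂ} (hu : Continuous u) :
    Continuous fun t : ℝ => ∫ τ in (0:ℝ)..t, Complex.exp (a * (t - τ)) * u τ := by
  have : (fun t : ℝ => ∫ τ in (0:ℝ)..t, Complex.exp (a * (t - τ)) * u τ)
      = fun t : ℝ => Complex.exp (a * t) * ∫ τ in (0:ℝ)..t, Complex.exp (-(a * τ)) * u τ := by
    funext t; exact conv_eq a u t
  rw [this]
  exact (by continuity : Continuous fun t : ℝ => Complex.exp (a * t)).mul
    (intervalIntegral.continuous_primitive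
      (fun c d => ((by continuity : Continuous fun τ : ℝ => Complex.exp (-(a * τ)) * u τ)).intervalIntegrable c d) 0)

lemma conv_bound {a : ℂ} (ha : a.re < 0) {u : ℝ → ℂ} (hu : Continuous u) {M : ℝ} (hM : 0 ≤ M)
    (hbd : ∀ τ : ℝ, 0 ≤ τ → ‖u τ‖ ≤ M) {t : ℝ} (ht : 0 ≤ t) :
    ‖∫ τ in (0:ℝ)..t, Complex.exp (a * (t - τ)) * u τ‖ ≤ M / (-a.re) := by
  set b := a.re with hbdef
  have hb : b < 0 := ha
  have hb' : (0:ℝ) < -b := by linarith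
  have key : ‖∫ τ in (0:ℝ)..t, Complex.exp (a * (t - τ)) * u τ‖ ≤
      |∫ τ in (0:ℝ)..t, M * Real.exp (b * (t - τ))| := by
    refine (intervalIntegral.norm_integral_le_of_norm_le ht ?_ ?_).trans (le_abs_self _)
    · filter_upwards with τ hτ
      rw [norm_mul, Complex.norm_exp]
      have h1 : (a * ((t:ℂ) - τ)).re = b * (t - τ) := by
        simp [Complex.mul_re, hbdef]
      rw [h1, mul_comm M]
      exact mul_le_mul_of_nonneg_left (hbd τ hτ.1.le) (Real.exp_pos _).le
    · exact ((by continuity : Continuous fun τ : ℝ => M * Real.exp (b * (t - τ)))).intervalIntegrable _ _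
  refine key.trans ?_
  have hJ : (∫ τ in (0:ℝ)..t, M * Real.exp (b * (t - τ)))
      = M * ((Real.exp (b * t) - 1) / b) := by
    rw [intervalIntegral.integral_const_mul]
    congr 1
    have h2 : (∫ τ in (0:ℝ)..t, Real.exp (b * (t - τ)))
        = ∫ x in (0:ℝ)..t, Real.exp (b * x) := by
      rw [intervalIntegral.integral_comp_sub_left (fun x => Real.exp (b * x)) t, sub_self, sub_zero]
    rw [h2, intervalIntegral.integral_comp_mul_left (fun x => Real.exp x) (ne_of_lt hb),
      mul_zero, integral_exp, Real.exp_zero, smul_eq_mul]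
    field_simp
  rw [hJ]
  have hE : Real.exp (b * t) ≤ 1 := Real.exp_le_one_iff.mpr (mul_nonpos_of_nonpos_of_nonneg hb.le ht)
  have h0 : 0 ≤ M * ((Real.exp (b * t) - 1) / b) := by
    apply mul_nonneg hM
    rw [div_nonneg_iff]
    right
    constructor <;> linarith
  rw [_root_.abs_of_nonneg h0, le_div_iff₀ hb']
  have hbne : b ≠ 0 := ne_of_lt hb
  have h3 : M * ((Real.exp (b * t) - 1) / b) * -b = M * (1 - Real.exp (b * t)) := by
    field_simp
    ring
  rw [h3]
  nlinarith [Real.exp_pos (b * t)]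

lemma exp_decay_tendsto {c : ℝ} (hc : 0 < c) (C : ℝ) :
    Filter.Tendsto (fun t : ℝ => C * Real.exp (-c * t)) Filter.atTop (nhds 0) := by
  have h1 : Filter.Tendsto (fun t : ℝ => Real.exp (-(c * t))) Filter.atTop (nhds 0) :=
    Real.tendsto_exp_neg_atTop_nhds_zero.comp (Filter.Tendsto.const_mul_atTop hc Filter.tendsto_id)
  have h2 : Filter.Tendsto (fun t : ℝ => C * Real.exp (-(c * t))) Filter.atTop (nhds (C * 0)) :=
    h1.const_mul C
  simpa [neg_mul] using h2

lemma conv_laplace {a : ℂ} (ha : a.re < 0) {u : ℝ → ℂ} (hu : Continuous u) {M : ℝ} (hM : 0 ≤ M)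
    (hbd : ∀ τ : ℝ, 0 ≤ τ → ‖u τ‖ ≤ M) {s : ℂ} (hs : 0 < s.re) :
    ∫ t in Set.Ioi (0:ℝ), Complex.exp (-s * t) *
        (∫ τ in (0:ℝ)..t, Complex.exp (a * (t - τ)) * u τ) =
      (∫ t in Set.Ioi (0:ℝ), Complex.exp (-s * t) * u t) / (s - a) := by
  set h : ℝ → ℂ := fun t => ∫ τ in (0:ℝ)..t, Complex.exp (a * (t - τ)) * u τ with hdef
  have hcont : Continuous h := conv_cont a hu
  have hbdh : ∀ t : ℝ, 0 ≤ t → ‖h t‖ ≤ M / (-a.re) := fun t ht => conv_bound ha hu hM hbd ht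
  have hM' : (0:ℝ) ≤ M / (-a.re) := div_nonneg hM (by linarith)
  have Ih : IntegrableOn (fun t : ℝ => Complex.exp (-s * t) * h t) (Set.Ioi (0:ℝ)) :=
    lapInt hcont hbdh hs
  have Iu : IntegrableOn (fun t : ℝ => Complex.exp (-s * t) * u t) (Set.Ioi (0:ℝ)) :=
    lapInt hu hbd hs
  -- derivative of h
  have hderivh : ∀ t : ℝ, HasDerivAt h (a * h t + u t) t := by
    intro t
    have hP : HasDerivAt (fun t : ℝ => ∫ τ in (0:ℝ)..t, Complex.exp (-(a * τ)) * u τ)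
        (Complex.exp (-(a * t)) * u t) t := by
      have hc : Continuous fun τ : ℝ => Complex.exp (-(a * τ)) * u τ := by continuity
      exact intervalIntegral.integral_hasDerivAt_right (hc.intervalIntegrable _ _)
        (hc.aestronglyMeasurable.stronglyMeasurableAtFilter) hc.continuousAt
    have hE : HasDerivAt (fun t : ℝ => Complex.exp (a * t)) (a * Complex.exp (a * t)) t := by
      have h0 : HasDerivAt (fun t : ℝ => a * (t : ℂ)) a t := by
        simpa using (Complex.ofRealCLM.hasDerivAt (x := t)).const_mul a
      simpa [mul_comm] using h0.cexp
    have hmul := hE.mul hP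
    have hre : h = fun t : ℝ => Complex.exp (a * t) * ∫ τ in (0:ℝ)..t, Complex.exp (-(a * τ)) * u τ :=
      funext (conv_eq a u)
    rw [hre]
    refine hmul.congr_deriv ?_
    have hexp : Complex.exp (a * t) * Complex.exp (-(a * t)) = 1 := by
      rw [← Complex.exp_add]; simp
    linear_combination (u t) * hexp
  -- derivative of Φ
  set Φ : ℝ → ℂ := fun t => Complex.exp (-s * t) * h t with hΦdef
  have hΦd : ∀ t : ℝ, HasDerivAt Φ
      (Complex.exp (-s * t) * u t + (a - s) * (Complex.exp (-s * t) * h t)) t := by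
    intro t
    have hE : HasDerivAt (fun t : ℝ => Complex.exp (-s * t)) (-s * Complex.exp (-s * t)) t := by
      have h0 : HasDerivAt (fun t : ℝ => -s * (t : ℂ)) (-s) t := by
        simpa using (Complex.ofRealCLM.hasDerivAt (x := t)).const_mul (-s)
      simpa [mul_comm] using h0.cexp
    have := hE.mul (hderivh t)
    refine this.congr_deriv ?_
    ring
  have htend : Filter.Tendsto Φ Filter.atTop (nhds 0) := by
    apply squeeze_zero_norm' _ (exp_decay_tendsto hs (M / (-a.re)))
    filter_upwards [Filter.eventually_ge_atTop (0:ℝ)] with t ht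
    rw [hΦdef]
    simp only [norm_mul, Complex.norm_exp]
    have h1 : (-s * (t:ℂ)).re = -s.re * t := by simp [Complex.mul_re]
    rw [h1, mul_comm]
    exact mul_le_mul_of_nonneg_right (hbdh t ht) (Real.exp_pos _).le
  have hint : IntegrableOn (fun t : ℝ => Complex.exp (-s * t) * u t
      + (a - s) * (Complex.exp (-s * t) * h t)) (Set.Ioi (0:ℝ)) :=
    Iu.add (Ih.const_mul _)
  have hFTC := integral_Ioi_of_hasDerivAt_of_tendsto' (f := Φ)
    (fun x _ => hΦd x) hint htend
  have hΦ0 : Φ 0 = 0 := by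
    simp [hΦdef, hdef]
  rw [hΦ0, sub_zero] at hFTC
  rw [integral_add Iu (Ih.const_mul _), MeasureTheory.integral_const_mul] at hFTC
  have hne : s - a ≠ 0 := by
    intro h0
    have := congrArg Complex.re h0
    simp [Complex.sub_re] at this
    linarith
  rw [eq_div_iff hne]
  linear_combination -hFTC

/-- The recursion (3.2.3) realizes multiplication by the rational function
∏ⱼ (s − αⱼ/r)/(s − αⱼ) in the Laplace transform domain. -/
theorem laplace_recursion_dirichlet (n : ℕ) (α : Fin n → ℂ)
    (hα : ∀ j, (α j).re < 0) (r : ℝ) (hr : r ≠ 0)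
    (f : ℝ → ℂ) (hf : Continuous f) (M : ℝ)
    (hbd : ∀ t : ℝ, 0 ≤ t → ‖f t‖ ≤ M)
    (φ : ℕ → ℝ → ℂ) (hφ0 : φ 0 = f)
    (hφ : ∀ (j : Fin n) (t : ℝ),
      φ (j + 1) t = φ j t + (1 - 1 / (r : ℂ)) * α j *
        ∫ τ in (0:ℝ)..t, Complex.exp (α j * (t - τ)) * φ j τ)
    (s : ℂ) (hs : 0 < s.re) :
    ∫ t in Set.Ioi (0:ℝ), Complex.exp (-s * t) * φ n t =
      (∫ t in Set.Ioi (0:ℝ), Complex.exp (-s * t) * f t) *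
        ∏ j, (s - α j / (r : ℂ)) / (s - α j) := by
  set β : ℕ → ℂ := fun j => if h : j < n then α ⟨j, h⟩ else -1 with hβ
  have hβre : ∀ j, (β j).re < 0 := by
    intro j
    by_cases h : j < n
    · simpa [hβ, h] using hα ⟨j, h⟩
    · norm_num [hβ, h]
  have hrC : (r : ℂ) ≠ 0 := Complex.ofReal_ne_zero.mpr hr
  have key : ∀ m, m ≤ n →
      Continuous (φ m) ∧ (∃ C : ℝ, 0 ≤ C ∧ ∀ t : ℝ, 0 ≤ t → ‖φ m t‖ ≤ C) ∧
      (∫ t in Set.Ioi (0:ℝ), Complex.exp (-s * t) * φ m t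
        = (∫ t in Set.Ioi (0:ℝ), Complex.exp (-s * t) * f t) *
          ∏ j ∈ range m, (s - β j / (r : ℂ)) / (s - β j)) := by
    intro m
    induction m with
    | zero =>
      intro _
      refine ⟨hφ0 ▸ hf, ⟨max M 0, le_max_right _ _,
        fun t ht => (hφ0 ▸ hbd t ht).trans (le_max_left _ _)⟩, by simp [hφ0]⟩
    | succ m ih =>
      intro hm
      have hmn : m < n := hm
      obtain ⟨hc, ⟨C, hC0, hCb⟩, hL⟩ := ih (le_of_lt hmn)
      have hβm : β m = α ⟨m, hmn⟩ := by simp [hβ, hmn]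
      set c : ℂ := (1 - 1 / (r : ℂ)) * β m with hcdef
      set K : ℝ → ℂ := fun t => ∫ τ in (0:ℝ)..t, Complex.exp (β m * (t - τ)) * φ m τ with hKdef
      have hrec : ∀ t : ℝ, φ (m + 1) t = φ m t + c * K t := by
        intro t
        rw [hcdef, hKdef, hβm]
        exact hφ ⟨m, hmn⟩ t
      have hKcont : Continuous K := conv_cont _ hc
      have hKbd : ∀ t : ℝ, 0 ≤ t → ‖K t‖ ≤ C / (-(β m).re) :=
        fun t ht => conv_bound (hβre m) hc hC0 hCb ht
      have hKbd0 : (0:ℝ) ≤ C / (-(β m).re) := div_nonneg hC0 (by linarith [hβre m])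
      have hcont1 : Continuous (φ (m + 1)) := by
        have : φ (m + 1) = fun t => φ m t + c * K t := funext hrec
        rw [this]
        exact hc.add (continuous_const.mul hKcont)
      have hbound1 : ∀ t : ℝ, 0 ≤ t → ‖φ (m + 1) t‖ ≤ C + ‖c‖ * (C / (-(β m).re)) := by
        intro t ht
        rw [hrec]
        refine (norm_add_le _ _).trans ?_
        rw [norm_mul]
        exact add_le_add (hCb t ht)
          (mul_le_mul_of_nonneg_left (hKbd t ht) (norm_nonneg c))
      have hC0' : (0:ℝ) ≤ C + ‖c‖ * (C / (-(β m).re)) :=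
        add_nonneg hC0 (mul_nonneg (norm_nonneg _) hKbd0)
      refine ⟨hcont1, ⟨_, hC0', hbound1⟩, ?_⟩
      have Iφ : IntegrableOn (fun t : ℝ => Complex.exp (-s * t) * φ m t) (Set.Ioi (0:ℝ)) :=
        lapInt hc hCb hs
      have IK : IntegrableOn (fun t : ℝ => Complex.exp (-s * t) * K t) (Set.Ioi (0:ℝ)) :=
        lapInt hKcont hKbd hs
      have heq : (fun t : ℝ => Complex.exp (-s * t) * φ (m + 1) t)
          = fun t : ℝ => Complex.exp (-s * t) * φ m t + c * (Complex.exp (-s * t) * K t) := by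
        funext t
        rw [hrec t]
        ring
      have hKlap : ∫ t in Set.Ioi (0:ℝ), Complex.exp (-s * t) * K t
          = (∫ t in Set.Ioi (0:ℝ), Complex.exp (-s * t) * φ m t) / (s - β m) :=
        conv_laplace (hβre m) hc hC0 hCb hs
      have hsplit : ∫ t in Set.Ioi (0:ℝ), Complex.exp (-s * t) * φ (m + 1) t
          = (∫ t in Set.Ioi (0:ℝ), Complex.exp (-s * t) * φ m t)
            + c * ∫ t in Set.Ioi (0:ℝ), Complex.exp (-s * t) * K t := by
        rw [heq, integral_add Iφ (IK.const_mul c), MeasureTheory.integral_const_mul]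
      rw [hsplit, hKlap, hL, prod_range_succ]
      have hne : s - β m ≠ 0 := by
        intro h0
        have := congrArg Complex.re h0
        simp [Complex.sub_re] at this
        linarith [hβre m]
      have halg : (1:ℂ) + c / (s - β m) = (s - β m / (r:ℂ)) / (s - β m) := by
        rw [hcdef]
        field_simp
        ring
      linear_combination ((∫ t in Set.Ioi (0:ℝ), Complex.exp (-s * t) * f t) *
        ∏ j ∈ range m, (s - β j / (r:ℂ)) / (s - β j)) * halg
  obtain ⟨_, _, hfin⟩ := key n le_rfl
  rw [hfin]
  congr 1
  rw [← Fin.prod_univ_eq_prod_range]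
  apply Finset.prod_congr rfl
  intro i _
  have hβi : β i.val = α i := by simp [hβ, i.isLt]
  rw [hβi]
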